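/- Let f₁,…,fₘ ∈ ℂ[x₁,…,xₘ] be polynomials whose top-degree homogeneous parts f₁⁺,…,fₘ⁺ have no common zero other than x = 0. Then the affine algebraic set V(f₁,…,fₘ) = {x ∈ ℂᵐ : f₁(x) = ⋯ = fₘ(x) = 0} is finite. -/

import Mathlib

open MvPolynomial Finset

noncomputable section

namespace Stmt7Aux

variable {σ : Type*} {R : Type*}

lemma coeff_high [CommRing R] {p : MvPolynomial σ R} {α : σ →₀ ℕ}
    (hα : p.totalDegree < α.degree) : coeff α p = 0 := by
  by_contra h
  exact absurd (le_totalDegree (p := p) (mem_support_iff.2 h)) (not_le.2 hα)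

/-- The top-degree homogeneous part. -/
def _root_.MvPolynomial.topPart [CommSemiring R] (p : MvPolynomial σ R) : MvPolynomial σ R :=
  homogeneousComponent p.totalDegree p

lemma topPart_isHomogeneous [CommSemiring R] (p : MvPolynomial σ R) :
    p.topPart.IsHomogeneous p.totalDegree :=
  homogeneousComponent_isHomogeneous _ _

lemma sub_topPart_lt [CommRing R] (p : MvPolynomial σ R) :
    p - p.topPart = 0 ∨ (p - p.topPart).totalDegree < p.totalDegree := by
  by_cases hz : p - p.topPart = 0
  · exact Or.inl hz
  right
  have key : ∀ α : σ →₀ ℕ, p.totalDegree ≤ α.degree →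
      coeff α (p - p.topPart) = 0 := by
    intro α hα
    rw [topPart, coeff_sub, coeff_homogeneousComponent]
    rcases eq_or_lt_of_le hα with h | h
    · rw [if_pos h.symm, sub_self]
    · rw [if_neg (by omega), coeff_high h, sub_zero]
  have hd0 : 0 < p.totalDegree := by
    rcases Nat.eq_zero_or_pos p.totalDegree with h | h
    · exact absurd (MvPolynomial.ext _ _ fun α => by
        simpa using key α (h ▸ Nat.zero_le _)) hz
    · exact h
  rw [totalDegree, Finset.sup_lt_iff (by simpa using hd0)]
  intro α hα
  by_contra hcon
  exact (mem_support_iff.1 hα) (key α (not_lt.1 hcon))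

lemma homogeneousComponent_mul_homogeneous [CommRing R] (g q : MvPolynomial σ R)
    {e : ℕ} (hq : q.IsHomogeneous e) (d : ℕ) :
    homogeneousComponent d (g * q) =
      if e ≤ d then homogeneousComponent (d - e) g * q else 0 := by
  conv_lhs => rw [← sum_homogeneousComponent g, Finset.sum_mul, map_sum]
  have hterm : ∀ k : ℕ, homogeneousComponent d (homogeneousComponent k g * q) =
      if d = k + e then homogeneousComponent k g * q else 0 := fun k =>
    homogeneousComponent_of_mem ((homogeneousComponent_isHomogeneous k g).mul hq)
  rw [Finset.sum_congr rfl fun k _ => hterm k]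
  rw [Finset.sum_eq_single (d - e)]
  · by_cases he : e ≤ d
    · rw [if_pos (by omega), if_pos he]
    · rw [if_neg (by omega), if_neg he]
  · intro b _ hb
    exact if_neg (by omega)
  · intro hmem
    by_cases he : e ≤ d
    · rw [if_pos (by omega)]
      rw [homogeneousComponent_eq_zero _ _ (by simp at hmem; omega), zero_mul]
    · exact if_neg (by omega)

variable {m : ℕ}

/-- Any homogeneous polynomial of high degree lies in an ideal containing all `X j ^ n j`. -/
lemma mem_of_high_degree (hm : 0 < m) (J : Ideal (MvPolynomial (Fin m) ℂ))
    (n : Fin m → ℕ) (hn : ∀ j, X j ^ n j ∈ J) {h : MvPolynomial (Fin m) ℂ} {d : ℕ}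
    (hh : h.IsHomogeneous d) (hd : (∑ j, n j) + 1 ≤ d) : h ∈ J := by
  have hmono : ∀ α : Fin m →₀ ℕ, (∑ j, n j) + 1 ≤ α.degree →
      (monomial α 1 : MvPolynomial (Fin m) ℂ) ∈ J := by
    intro α hα
    have hj : ∃ j, n j ≤ α j := by
      by_contra hcon
      push_neg at hcon
      have h1 : α.degree ≤ ∑ j, α j := by
        rw [Finsupp.degree]
        exact Finset.sum_le_sum_of_subset (Finset.subset_univ _)
      have h2 : ∑ j, α j < ∑ j, n j :=
        Finset.sum_lt_sum_of_nonempty (Finset.univ_nonempty_iff.2 ⟨⟨0, hm⟩⟩)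
          fun j _ => hcon j
      omega
    obtain ⟨j, hj⟩ := hj
    have heq : (monomial α 1 : MvPolynomial (Fin m) ℂ)
        = monomial (α - Finsupp.single j (n j)) 1 * X j ^ n j := by
      rw [X_pow_eq_monomial, monomial_mul, mul_one,
        tsub_add_cancel_of_le (Finsupp.single_le_iff.2 hj)]
    rw [heq]
    exact Ideal.mul_mem_left _ _ (hn j)
  rw [← support_sum_monomial_coeff h]
  refine Submodule.sum_mem _ fun α hα => ?_
  have : (monomial α (coeff α h) : MvPolynomial (Fin m) ℂ)
      = C (coeff α h) * monomial α 1 := by rw [C_mul_monomial, mul_one]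
  rw [this]
  refine Ideal.mul_mem_left _ _ (hmono α ?_)
  have := hh (mem_support_iff.1 hα)
  rw [show Finsupp.weight 1 α = α.degree from
    (DFunLike.congr_fun Finsupp.degree_eq_weight_one α).symm] at this
  omega

variable (f : Fin m → MvPolynomial (Fin m) ℂ)

/-- Homogeneous elements of high degree admit a representation with controlled degrees. -/
lemma exists_rep (hm : 0 < m) (n : Fin m → ℕ)
    (hn : ∀ j, X j ^ n j ∈ Ideal.span (Set.range fun i => (f i).topPart))
    {h : MvPolynomial (Fin m) ℂ} {d : ℕ}
    (hh : h.IsHomogeneous d) (hd : (∑ j, n j) + 1 ≤ d) :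
    ∃ c : Fin m → MvPolynomial (Fin m) ℂ, h = ∑ i, c i * (f i).topPart ∧
      ∀ i, c i * (f i - (f i).topPart) = 0 ∨
        (c i * (f i - (f i).topPart)).totalDegree < d := by
  have hmem : h ∈ Ideal.span (Set.range fun i => (f i).topPart) :=
    mem_of_high_degree hm _ n hn hh hd
  rw [Ideal.span, Submodule.mem_span_range_iff_exists_fun] at hmem
  obtain ⟨g, hg⟩ := hmem
  refine ⟨fun i => if (f i).totalDegree ≤ d
      then homogeneousComponent (d - (f i).totalDegree) (g i) else 0, ?_, ?_⟩
  · have h1 : homogeneousComponent d h = h := by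
      rw [homogeneousComponent_of_mem ((mem_homogeneousSubmodule d h).2 hh), if_pos rfl]
    conv_lhs => rw [← h1, ← hg]
    simp only [smul_eq_mul, map_sum]
    refine Finset.sum_congr rfl fun i _ => ?_
    rw [homogeneousComponent_mul_homogeneous (g i) _ (topPart_isHomogeneous (f i)) d]
    by_cases hle : (f i).totalDegree ≤ d
    · rw [if_pos hle, if_pos hle]
    · rw [if_neg hle, if_neg hle, zero_mul]
  · intro i
    by_cases hle : (f i).totalDegree ≤ d
    · rcases sub_topPart_lt (f i) with h0 | hlt
      · rw [h0, mul_zero]; exact Or.inl rfl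
      · right
        simp only [if_pos hle]
        calc (homogeneousComponent (d - (f i).totalDegree) (g i) *
                (f i - (f i).topPart)).totalDegree
            ≤ (homogeneousComponent (d - (f i).totalDegree) (g i)).totalDegree
              + (f i - (f i).topPart).totalDegree := totalDegree_mul _ _
          _ ≤ (d - (f i).totalDegree) + (f i - (f i).topPart).totalDegree :=
              Nat.add_le_add_right ((homogeneousComponent_isHomogeneous _ _).totalDegree_le) _
          _ < d := by omega
    · left
      simp only [if_neg hle, zero_mul]

lemma descent (D : ℕ) (hD : 1 ≤ D)
    (hrep : ∀ (h : MvPolynomial (Fin m) ℂ) (d : ℕ), h.IsHomogeneous d → D ≤ d →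
      ∃ c : Fin m → MvPolynomial (Fin m) ℂ, h = ∑ i, c i * (f i).topPart ∧
        ∀ i, c i * (f i - (f i).topPart) = 0 ∨
          (c i * (f i - (f i).topPart)).totalDegree < d) :
    ∀ (N : ℕ) (p : MvPolynomial (Fin m) ℂ), p.totalDegree ≤ N →
      ∃ q, q.totalDegree ≤ D ∧ p - q ∈ Ideal.span (Set.range f) := by
  intro N
  induction N with
  | zero => exact fun p hp => ⟨p, le_trans hp (by omega), by simp⟩
  | succ N ih =>
    intro p hp
    by_cases hpD : p.totalDegree ≤ D
    · exact ⟨p, hpD, by simp⟩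
    push_neg at hpD
    obtain ⟨c, hc1, hc2⟩ := hrep (homogeneousComponent p.totalDegree p) p.totalDegree
      (homogeneousComponent_isHomogeneous _ p) (le_of_lt hpD)
    set p' := p - ∑ i, c i * f i with hp'
    have hkey : p' = (p - homogeneousComponent p.totalDegree p)
        - ∑ i, c i * (f i - (f i).topPart) := by
      have : homogeneousComponent p.totalDegree p = ∑ i, c i * (f i).topPart := hc1
      rw [hp', this]
      simp only [mul_sub, Finset.sum_sub_distrib]
      ring
    have hdeg : p'.totalDegree ≤ N := by
      have h1 : (p - homogeneousComponent p.totalDegree p).totalDegree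
          ≤ p.totalDegree - 1 := by
        rcases sub_topPart_lt p with h0 | hlt
        · rw [topPart] at h0; rw [h0]; simp
        · rw [topPart] at hlt; omega
      have h2 : (∑ i, c i * (f i - (f i).topPart)).totalDegree ≤ p.totalDegree - 1 := by
        refine le_trans (totalDegree_finset_sum _ _) (Finset.sup_le fun i _ => ?_)
        rcases hc2 i with h0 | hlt
        · rw [h0]; simp
        · omega
      have h3 := le_trans (totalDegree_sub _ _) (max_le h1 h2)
      rw [← hkey] at h3
      omega
    obtain ⟨q, hq1, hq2⟩ := ih p' hdeg
    refine ⟨q, hq1, ?_⟩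
    have : p - q = (p' - q) + ∑ i, c i * f i := by rw [hp']; ring
    rw [this]
    exact Submodule.add_mem _ hq2 (Submodule.sum_mem _ fun i _ =>
      Ideal.mul_mem_left _ _ (Ideal.subset_span ⟨i, rfl⟩))

end Stmt7Aux

end

open Stmt7Aux in
theorem stmt7 (m : ℕ) (f : Fin m → MvPolynomial (Fin m) ℂ)
    (hf : ∀ x : Fin m → ℂ,
      (∀ i, eval x (homogeneousComponent (f i).totalDegree (f i)) = 0) → x = 0) :
    {x : Fin m → ℂ | ∀ i, eval x (f i) = 0}.Finite := by
  rcases Nat.eq_zero_or_pos m with hm | hm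
  · subst hm
    haveI : Subsingleton (Fin 0 → ℂ) := ⟨fun a b => funext fun x => x.elim0⟩
    exact Set.subsingleton_of_subsingleton.finite
  -- powers of variables lie in the span of the top-degree parts
  have hXj : ∀ j, ∃ nj : ℕ,
      X j ^ nj ∈ Ideal.span (Set.range fun i => (f i).topPart) := by
    intro j
    have hrad : (X j : MvPolynomial (Fin m) ℂ)
        ∈ (Ideal.span (Set.range fun i => (f i).topPart)).radical := by
      rw [← vanishingIdeal_zeroLocus_eq_radical (K := ℂ), mem_vanishingIdeal_iff]
      intro x hx
      have hx0 : x = 0 := hf x fun i => hx _ (Ideal.subset_span ⟨i, rfl⟩)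
      subst hx0
      simp
    exact hrad
  choose n hn using hXj
  set D : ℕ := (∑ j, n j) + 1 with hD
  have hdesc : ∀ p : MvPolynomial (Fin m) ℂ,
      ∃ q, q.totalDegree ≤ D ∧ p - q ∈ Ideal.span (Set.range f) :=
    fun p => descent f D (by omega)
      (fun h d hh hd => exists_rep f hm n hn hh hd) p.totalDegree p le_rfl
  rw [← Set.finite_coe_iff]
  set V := {x : Fin m → ℂ | ∀ i, eval x (f i) = 0} with hV
  set W := restrictTotalDegree (Fin m) ℂ D with hW
  -- evaluation functionals on the finite-dimensional space W
  set φ : (Fin m → ℂ) → (W →ₗ[ℂ] ℂ) := fun x =>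
    { toFun := fun w => eval x (w : MvPolynomial (Fin m) ℂ)
      map_add' := by intros; simp
      map_smul' := by intros; simp [smul_eval] } with hφ
  have hker : ∀ x : V, ∀ r ∈ Ideal.span (Set.range f),
      eval (x : Fin m → ℂ) r = 0 := by
    intro x r hr
    have hle : Ideal.span (Set.range f) ≤ RingHom.ker (eval (x : Fin m → ℂ)) := by
      rw [Ideal.span_le]
      rintro _ ⟨i, rfl⟩
      exact x.2 i
    exact hle hr
  have hchar : LinearIndependent ℂ
      (fun x : V => ⇑((eval (x : Fin m → ℂ)).toMonoidHom :
        MvPolynomial (Fin m) ℂ →* ℂ)) := by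
    refine (linearIndependent_monoidHom (MvPolynomial (Fin m) ℂ) ℂ).comp
      (fun x : V => (eval (x : Fin m → ℂ)).toMonoidHom) ?_
    intro x y hxy
    refine Subtype.ext (funext fun j => ?_)
    have := congrArg (fun ψ : MvPolynomial (Fin m) ℂ →* ℂ => ψ (X j)) hxy
    simpa using this
  have hli : LinearIndependent ℂ (fun x : V => φ x) := by
    rw [linearIndependent_iff'] at hchar ⊢
    intro s g hsum x hx
    refine hchar s g ?_ x hx
    funext p
    obtain ⟨q, hq1, hq2⟩ := hdesc p
    have hq' : q ∈ W := by rw [hW, mem_restrictTotalDegree]; exact hq1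
    have hpq : ∀ x : V, eval (x : Fin m → ℂ) p = eval (x : Fin m → ℂ) q := by
      intro x
      have h0 := hker x _ hq2
      rw [map_sub, sub_eq_zero] at h0
      exact h0
    have h1 := congrArg (fun L : W →ₗ[ℂ] ℂ => L ⟨q, hq'⟩) hsum
    simp only [LinearMap.coe_sum, Finset.sum_apply, LinearMap.smul_apply,
      LinearMap.zero_apply, smul_eq_mul, hφ, LinearMap.coe_mk, AddHom.coe_mk] at h1
    simp only [Finset.sum_apply, Pi.smul_apply, Pi.zero_apply, smul_eq_mul,
      RingHom.toMonoidHom_eq_coe, MonoidHom.coe_coe]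
    calc ∑ i ∈ s, g i * (eval (i : Fin m → ℂ)) p
        = ∑ i ∈ s, g i * (eval (i : Fin m → ℂ)) q :=
          Finset.sum_congr rfl fun i _ => by rw [hpq i]
      _ = 0 := h1
  haveI : IsNoetherian ℂ (W →ₗ[ℂ] ℂ) := inferInstance
  exact hli.finite_of_isNoetherian
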